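/- Let S₁, …, S_m ⊂ ℝⁿ be line segments (each S_i = conv{p_i, q_i} with p_i ≠ q_i), and let Z = S₁ ⊕ ⋯ ⊕ S_m be their Minkowski sum (a zonotope). Then the number of vertices (extreme points) of Z is at most 2 Σ_{j=0}^{n−1} C(m−1, j). -/

import Mathlib

open scoped Pointwise RealInnerProductSpace
open Module

noncomputable section ZonotopeVertexBoundAux


private def zB (n m : ℕ) : ℕ := 2 * ∑ j ∈ Finset.range n, Nat.choose (m - 1) j

private def signSet {E : Type} [NormedAddCommGroup E] [InnerProductSpace ℝ E]
    {m : ℕ} (d : Fin m → E) : Set (Fin m → Bool) :=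
  {σ | ∃ c : E, ∀ i, if σ i then 0 < ⟪c, d i⟫ else ⟪c, d i⟫ < 0}

private lemma signSet_eq_empty_of_subsingleton {E : Type} [NormedAddCommGroup E]
    [InnerProductSpace ℝ E] (hE : Subsingleton E) {m : ℕ} (hm : 0 < m) (d : Fin m → E) :
    signSet d = ∅ := by
  ext σ
  simp only [signSet, Set.mem_setOf_eq, Set.mem_empty_iff_false, iff_false]
  rintro ⟨c, h⟩
  have h0 := h ⟨0, hm⟩
  have hc : c = 0 := Subsingleton.elim _ _
  rw [hc, inner_zero_left] at h0
  split at h0 <;> exact lt_irrefl _ h0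

private lemma zB_rec (k m : ℕ) (hm : 1 ≤ m) : zB (k + 1) m + zB k m = zB (k + 1) (m + 1) := by
  obtain ⟨m', rfl⟩ := Nat.exists_eq_add_of_le hm
  simp only [zB, Nat.add_sub_cancel_left, Nat.add_sub_cancel]
  rw [← Nat.left_distrib]
  congr 1
  rw [Finset.sum_range_succ' (fun j => Nat.choose (1 + m') j),
    Finset.sum_range_succ' (fun j => Nat.choose m' j)]
  have h1m : 1 + m' = m' + 1 := by omega
  simp only [h1m, Nat.choose_zero_right, Nat.choose_succ_succ]
  rw [Finset.sum_add_distrib]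
  simp only [Nat.succ_eq_add_one]
  omega

private lemma zB_one (k : ℕ) : zB (k + 1) 1 = 2 := by
  have : ∑ j ∈ Finset.range (k + 1), Nat.choose 0 j = 1 := by
    rw [Finset.sum_eq_single_of_mem 0 (Finset.mem_range.mpr (by omega))]
    · rfl
    · intro j _ hj
      exact Nat.choose_eq_zero_of_lt (by omega)
  simp [zB, this]

private lemma signSet_ncard_le (m : ℕ) (hm : 1 ≤ m) :
    ∀ (E : Type) [NormedAddCommGroup E] [InnerProductSpace ℝ E] [FiniteDimensional ℝ E]
      (d : Fin m → E), (signSet d).ncard ≤ zB (finrank ℝ E) m := by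
  induction m, hm using Nat.le_induction with
  | base =>
    intro E _ _ _ d
    rcases Nat.eq_zero_or_eq_succ_pred (finrank ℝ E) with hn | hn
    · rw [signSet_eq_empty_of_subsingleton (finrank_zero_iff.mp hn) one_pos]
      simp
    · rw [hn, zB_one]
      calc (signSet d).ncard ≤ (Set.univ : Set (Fin 1 → Bool)).ncard :=
            Set.ncard_le_ncard (Set.subset_univ _)
        _ = 2 := by simp [Set.ncard_univ]
  | succ m hm IH =>
    intro E _ _ _ d
    by_cases hsub : Subsingleton E
    · rw [signSet_eq_empty_of_subsingleton hsub (by omega)]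
      simp
    by_cases hdl : d (Fin.last m) = 0
    · have hempty : signSet d = ∅ := by
        ext σ
        simp only [signSet, Set.mem_setOf_eq, Set.mem_empty_iff_false, iff_false]
        rintro ⟨c, h⟩
        have h0 := h (Fin.last m)
        rw [hdl, inner_zero_right] at h0
        split at h0 <;> exact lt_irrefl _ h0
      rw [hempty]; simp
    obtain ⟨k, hk⟩ : ∃ k, finrank ℝ E = k + 1 := by
      refine ⟨finrank ℝ E - 1, ?_⟩
      have : finrank ℝ E ≠ 0 := fun h => hsub (finrank_zero_iff.mp h)
      omega
    set dl : E := d (Fin.last m) with hdl'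
    set W : Submodule ℝ E := (ℝ ∙ dl)ᗮ with hW
    have hrankW : finrank ℝ W = k := by
      have h1 : finrank ℝ (ℝ ∙ dl) + finrank ℝ W = finrank ℝ E :=
        Submodule.finrank_add_finrank_orthogonal _
      rw [finrank_span_singleton hdl, hk] at h1
      omega
    set d₀ : Fin m → E := fun i => d i.castSucc with hd₀
    set dW : Fin m → W := fun i => W.orthogonalProjectionOnto (d₀ i) with hdW
    set r : (Fin (m + 1) → Bool) → (Fin m → Bool) := fun σ i => σ i.castSucc with hr
    set At : Set (Fin (m + 1) → Bool) := signSet d ∩ {σ | σ (Fin.last m) = true} with hAt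
    set Af : Set (Fin (m + 1) → Bool) := signSet d ∩ {σ | σ (Fin.last m) = false} with hAf
    have hres : ∀ σ ∈ signSet d, r σ ∈ signSet d₀ := by
      rintro σ ⟨c, hc⟩
      exact ⟨c, fun i => hc i.castSucc⟩
    have hinj : ∀ b : Bool, Set.InjOn r (signSet d ∩ {σ | σ (Fin.last m) = b}) := by
      intro b σ hσ τ hτ hrστ
      funext i
      refine Fin.lastCases ?_ (fun j => ?_) i
      · rw [hσ.2, hτ.2]
      · exact congrFun hrστ j
    have hsplit : signSet d = At ∪ Af := by
      ext σ
      rw [hAt, hAf]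
      rcases Bool.eq_false_or_eq_true (σ (Fin.last m)) with h | h <;>
        simp [Set.mem_union, Set.mem_inter_iff, h]
    have hdisj : Disjoint At Af := by
      rw [Set.disjoint_left]
      rintro σ ⟨_, h1⟩ ⟨_, h2⟩
      rw [Set.mem_setOf_eq] at h1 h2
      rw [h1] at h2
      exact Bool.noConfusion h2
    have hunion : r '' At ∪ r '' Af ⊆ signSet d₀ := by
      refine Set.union_subset ?_ ?_ <;> rintro _ ⟨σ, hσ, rfl⟩ <;> exact hres σ hσ.1
    have hkey : r '' At ∩ r '' Af ⊆ signSet dW := by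
      rintro σ' ⟨⟨σt, ⟨⟨cp, hcp⟩, hσtl⟩, rfl⟩, ⟨σf, ⟨⟨cm, hcm⟩, hσfl⟩, hrf⟩⟩
      rw [Set.mem_setOf_eq] at hσtl hσfl
      have hp : 0 < ⟪cp, dl⟫ := by
        have h0 := hcp (Fin.last m); rw [hσtl] at h0; simpa using h0
      have hmneg : ⟪cm, dl⟫ < 0 := by
        have h0 := hcm (Fin.last m); rw [hσfl] at h0; simpa using h0
      set s : ℝ := ⟪cp, dl⟫ with hs
      set t : ℝ := -⟪cm, dl⟫ with ht
      have hspos : 0 < s := hp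
      have htpos : 0 < t := by rw [ht]; linarith
      have hcmdl : (⟪cm, dl⟫ : ℝ) = -t := by rw [ht]; ring
      set c0 : E := t • cp + s • cm with hc0
      have hc0W : c0 ∈ W := by
        rw [hW, Submodule.mem_orthogonal_singleton_iff_inner_right, hc0,
          inner_add_right, real_inner_smul_right, real_inner_smul_right]
        have e1 : (⟪dl, cp⟫ : ℝ) = s := (real_inner_comm cp dl).trans hs.symm
        have e2 : (⟪dl, cm⟫ : ℝ) = -t := (real_inner_comm cm dl).trans hcmdl
        rw [e1, e2]
        ring
      refine ⟨⟨c0, hc0W⟩, fun i => ?_⟩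
      have hinner : (⟪(⟨c0, hc0W⟩ : W), dW i⟫ : ℝ) = ⟪c0, d₀ i⟫ := by
        rw [hdW, Submodule.coe_inner]
        have hz : ⟪c0, d₀ i - (W.orthogonalProjectionOnto (d₀ i) : E)⟫ = 0 :=
          Submodule.inner_right_of_mem_orthogonal hc0W
            (W.sub_starProjection_mem_orthogonal (d₀ i))
        rw [inner_sub_right] at hz
        linarith
      have hcomb : ⟪c0, d₀ i⟫ = t * ⟪cp, d₀ i⟫ + s * ⟪cm, d₀ i⟫ := by
        rw [hc0, inner_add_left, real_inner_smul_left, real_inner_smul_left]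
      have hd0i : d₀ i = d i.castSucc := rfl
      have hval : σf i.castSucc = σt i.castSucc := congrFun hrf i
      have h1 := hcp i.castSucc
      have h2 := hcm i.castSucc
      rw [hval] at h2
      have hri : r σt i = σt i.castSucc := rfl
      rw [hri]
      by_cases hb : σt i.castSucc = true
      · rw [hb] at h1 h2 ⊢
        simp only [if_true] at h1 h2 ⊢
        rw [hinner, hcomb, ← hd0i] at *
        have e1 := mul_pos htpos h1
        have e2 := mul_pos hspos h2
        rw [hd0i]
        linarith
      · rw [Bool.not_eq_true] at hb
        rw [hb] at h1 h2 ⊢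
        simp only [Bool.false_eq_true, if_false] at h1 h2 ⊢
        rw [hinner, hcomb]
        have e1 := mul_pos htpos (by rw [hd0i]; linarith : (0:ℝ) < -⟪cp, d₀ i⟫)
        have e2 := mul_pos hspos (by rw [hd0i]; linarith : (0:ℝ) < -⟪cm, d₀ i⟫)
        linarith
    haveI : FiniteDimensional ℝ W := inferInstance
    calc (signSet d).ncard = At.ncard + Af.ncard := by
          rw [hsplit, Set.ncard_union_eq hdisj]
      _ = (r '' At).ncard + (r '' Af).ncard := by
          rw [Set.ncard_image_of_injOn (hinj true), Set.ncard_image_of_injOn (hinj false)]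
      _ = (r '' At ∪ r '' Af).ncard + (r '' At ∩ r '' Af).ncard :=
          (Set.ncard_union_add_ncard_inter _ _).symm
      _ ≤ (signSet d₀).ncard + (signSet dW).ncard :=
          add_le_add (Set.ncard_le_ncard hunion) (Set.ncard_le_ncard hkey)
      _ ≤ zB (finrank ℝ E) m + zB (finrank ℝ W) m := add_le_add (IH E d₀) (IH W dW)
      _ = zB (k + 1) m + zB k m := by rw [hk, hrankW]
      _ = zB (k + 1) (m + 1) := zB_rec k m hm
      _ = zB (finrank ℝ E) (m + 1) := by rw [hk]


private lemma gordan {E : Type} [NormedAddCommGroup E] [InnerProductSpace ℝ E]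
    [FiniteDimensional ℝ E] {k : ℕ} (a : Fin k → E) (h : ¬ ∃ c : E, ∀ i, 0 < ⟪c, a i⟫) :
    ∃ lam : Fin k → ℝ, (∀ i, 0 ≤ lam i) ∧ ∑ i, lam i = 1 ∧ ∑ i, lam i • a i = 0 := by
  by_cases h0 : (0 : E) ∈ convexHull ℝ (Set.range a)
  · rw [convexHull_range_eq_exists_affineCombination] at h0
    obtain ⟨s, w, hw0, hw1, haff⟩ := h0
    refine ⟨fun i => if i ∈ s then w i else 0, fun i => ?_, ?_, ?_⟩
    · dsimp only
      split
      · exact hw0 _ ‹_›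
      · exact le_refl _
    · simp only
      rw [Finset.sum_ite_mem, Finset.univ_inter, hw1]
    · simp only [ite_smul, zero_smul]
      rw [Finset.sum_ite_mem, Finset.univ_inter,
        ← Finset.affineCombination_eq_linear_combination s a w hw1, haff]
  · exfalso
    obtain ⟨f, u, hf, hu0⟩ := geometric_hahn_banach_closed_point (convex_convexHull ℝ _)
      ((Set.finite_range a).isClosed_convexHull ℝ) h0
    have hu : u < 0 := by simpa using hu0
    refine h ⟨-(InnerProductSpace.toDual ℝ E).symm f, fun i => ?_⟩
    have hai : f (a i) < u := hf _ (subset_convexHull ℝ _ (Set.mem_range_self i))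
    rw [inner_neg_left, InnerProductSpace.toDual_symm_apply]
    linarith


private lemma not_extreme_of_open_coeff {E : Type} [NormedAddCommGroup E]
    [InnerProductSpace ℝ E] {m : ℕ} (p q : Fin m → E) (x : Fin m → E)
    (hx : ∀ i, x i ∈ segment ℝ (p i) (q i)) (i0 : Fin m) (t : ℝ) (ht0 : 0 < t) (ht1 : t < 1)
    (hxi : x i0 = p i0 + t • (q i0 - p i0)) (hne : p i0 ≠ q i0) :
    (∑ i, x i) ∉ Set.extremePoints ℝ (∑ i : Fin m, segment ℝ (p i) (q i)) := by
  intro hv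
  set dd : E := q i0 - p i0 with hdd
  have hdne : dd ≠ 0 := sub_ne_zero.mpr (Ne.symm hne)
  set ε : ℝ := min t (1 - t) with hε
  have hε0 : 0 < ε := lt_min ht0 (by linarith)
  have hεt : ε ≤ t := min_le_left _ _
  have hεt1 : ε ≤ 1 - t := min_le_right _ _
  have hmem : ∀ u : ℝ, 0 ≤ u → u ≤ 1 → (p i0 + u • dd) ∈ segment ℝ (p i0) (q i0) := by
    intro u hu0 hu1
    rw [segment_eq_image']
    exact ⟨u, ⟨hu0, hu1⟩, rfl⟩
  set xm : Fin m → E := Function.update x i0 (p i0 + (t - ε) • dd) with hxm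
  set xp : Fin m → E := Function.update x i0 (p i0 + (t + ε) • dd) with hxp
  have hxm_mem : ∀ i, xm i ∈ segment ℝ (p i) (q i) := by
    intro i
    rcases eq_or_ne i i0 with rfl | hi
    · rw [hxm, Function.update_self]; exact hmem _ (by linarith) (by linarith)
    · rw [hxm, Function.update_of_ne hi]; exact hx i
  have hxp_mem : ∀ i, xp i ∈ segment ℝ (p i) (q i) := by
    intro i
    rcases eq_or_ne i i0 with rfl | hi
    · rw [hxp, Function.update_self]; exact hmem _ (by linarith) (by linarith)
    · rw [hxp, Function.update_of_ne hi]; exact hx i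
  have hvm : (∑ i, xm i) ∈ ∑ i : Fin m, segment ℝ (p i) (q i) :=
    Set.finset_sum_mem_finset_sum _ _ _ (fun i _ => hxm_mem i)
  have hvp : (∑ i, xp i) ∈ ∑ i : Fin m, segment ℝ (p i) (q i) :=
    Set.finset_sum_mem_finset_sum _ _ _ (fun i _ => hxp_mem i)
  have hsm : ∑ i, xm i = (p i0 + (t - ε) • dd) + ∑ i ∈ Finset.univ \ {i0}, x i := by
    rw [hxm]; exact Finset.sum_update_of_mem (Finset.mem_univ i0) x _
  have hsp : ∑ i, xp i = (p i0 + (t + ε) • dd) + ∑ i ∈ Finset.univ \ {i0}, x i := by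
    rw [hxp]; exact Finset.sum_update_of_mem (Finset.mem_univ i0) x _
  have hsx : ∑ i, x i = (∑ i ∈ Finset.univ \ {i0}, x i) + x i0 :=
    (Finset.sum_eq_sum_sdiff_singleton_add (Finset.mem_univ i0) x).symm ▸ rfl
  have hmid : (∑ i, x i) ∈ openSegment ℝ (∑ i, xm i) (∑ i, xp i) := by
    refine ⟨1/2, 1/2, by norm_num, by norm_num, by norm_num, ?_⟩
    rw [hsm, hsp, hsx, hxi]
    module
  obtain ⟨h1, h2⟩ := (mem_extremePoints.mp hv).2 _ hvm _ hvp hmid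
  have hdiff : (∑ i, xp i) - (∑ i, xm i) = (2 * ε) • dd := by
    rw [hsm, hsp]
    module
  rw [h1, h2, sub_self] at hdiff
  rcases smul_eq_zero.mp hdiff.symm with h | h
  · linarith
  · exact hdne h

private lemma extreme_exists_sign {E : Type} [NormedAddCommGroup E] [InnerProductSpace ℝ E]
    [FiniteDimensional ℝ E] {m : ℕ} (p q : Fin m → E) (hpq : ∀ i, p i ≠ q i) {v : E}
    (hv : v ∈ Set.extremePoints ℝ (∑ i : Fin m, segment ℝ (p i) (q i))) :
    ∃ σ ∈ signSet (fun i => q i - p i), v = ∑ i, (if σ i then q i else p i) := by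
  have hvZ := hv.1
  rw [Set.mem_fintype_sum] at hvZ
  obtain ⟨x, hx, hxv⟩ := hvZ
  have hθ : ∀ i, ∃ θ : ℝ, 0 ≤ θ ∧ θ ≤ 1 ∧ x i = p i + θ • (q i - p i) := by
    intro i
    have h := hx i
    rw [segment_eq_image'] at h
    obtain ⟨θ, hθ, he⟩ := h
    exact ⟨θ, hθ.1, hθ.2, he.symm⟩
  choose θ hθ0 hθ1 hθx using hθ
  have h01 : ∀ i, θ i = 0 ∨ θ i = 1 := by
    intro i
    by_contra hcon
    push_neg at hcon
    have h0 : 0 < θ i := lt_of_le_of_ne (hθ0 i) (Ne.symm hcon.1)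
    have h1 : θ i < 1 := lt_of_le_of_ne (hθ1 i) hcon.2
    exact not_extreme_of_open_coeff p q x hx i (θ i) h0 h1 (hθx i) (hpq i)
      (by rw [hxv]; exact hv)
  set σ : Fin m → Bool := fun i => decide (θ i = 1) with hσ
  have hxσ : ∀ i, x i = if σ i then q i else p i := by
    intro i
    rcases h01 i with h | h
    · have hσi : σ i = false := by
        rw [hσ]
        simp only [decide_eq_false_iff_not, h]
        norm_num
      rw [hσi, if_neg (by simp), hθx i, h, zero_smul, add_zero]
    · have hσi : σ i = true := by rw [hσ]; simp [h]
      rw [hσi, if_pos rfl, hθx i, h, one_smul]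
      abel
  set a : Fin m → E := fun i => if σ i then q i - p i else p i - q i with ha
  by_cases hgor : ∃ c : E, ∀ i, 0 < ⟪c, a i⟫
  · obtain ⟨c, hc⟩ := hgor
    refine ⟨σ, ⟨c, fun i => ?_⟩, ?_⟩
    · have hci := hc i
      by_cases hb : σ i = true
      · rw [hb]
        simp only [if_true]
        rw [ha] at hci
        simp only [hb, if_true] at hci
        exact hci
      · rw [Bool.not_eq_true] at hb
        rw [hb]
        simp only [Bool.false_eq_true, if_false]
        rw [ha] at hci
        simp only [hb, Bool.false_eq_true, if_false] at hci
        rw [show p i - q i = -(q i - p i) from by abel, inner_neg_right] at hci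
        linarith
    · rw [← hxv]
      exact Finset.sum_congr rfl fun i _ => hxσ i
  · exfalso
    obtain ⟨lam, hlam0, hlam1, hlamsum⟩ := gordan a hgor
    obtain ⟨i0, -, hi0⟩ : ∃ i ∈ Finset.univ, 0 < lam i := by
      apply Finset.exists_lt_of_sum_lt (f := fun _ => (0:ℝ))
      rw [hlam1]; simp
    have hle1 : ∀ i, lam i ≤ 1 := fun i =>
      hlam1 ▸ Finset.single_le_sum (fun j _ => hlam0 j) (Finset.mem_univ i)
    set y : Fin m → E := fun i => x i - (lam i / 2) • a i with hy
    set θ' : Fin m → ℝ := fun i => if σ i then 1 - lam i / 2 else lam i / 2 with hθ'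
    have hy_eq : ∀ i, y i = p i + θ' i • (q i - p i) := by
      intro i
      rw [hy, hθ', ha]
      simp only [hxσ i]
      by_cases hb : σ i = true
      · simp only [hb, if_true]
        module
      · rw [Bool.not_eq_true] at hb
        simp only [hb, Bool.false_eq_true, if_false]
        module
    have hy_mem : ∀ i, y i ∈ segment ℝ (p i) (q i) := by
      intro i
      rw [hy_eq i, segment_eq_image']
      refine ⟨θ' i, ⟨?_, ?_⟩, rfl⟩ <;>
        · rw [hθ']
          have h0 := hlam0 i
          have h1 := hle1 i
          dsimp only
          split <;> linarith
    have hysum : ∑ i, y i = v := by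
      have hhalf : ∑ i, (lam i / 2) • a i = (1/2 : ℝ) • ∑ i, lam i • a i := by
        rw [Finset.smul_sum]
        exact Finset.sum_congr rfl fun i _ => by rw [smul_smul]; congr 1; ring
      simp only [hy]
      rw [Finset.sum_sub_distrib, hhalf, hlamsum, smul_zero, sub_zero, hxv]
    have hθ'0 : 0 < θ' i0 := by
      rw [hθ']
      have h1 := hle1 i0
      dsimp only
      split <;> linarith
    have hθ'1 : θ' i0 < 1 := by
      rw [hθ']
      have h1 := hle1 i0
      dsimp only
      split <;> linarith
    have hnot := not_extreme_of_open_coeff p q y hy_mem i0 (θ' i0) hθ'0 hθ'1 (hy_eq i0) (hpq i0)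
    rw [hysum] at hnot
    exact hnot hv


/-- A zonotope `Z ⊆ ℝⁿ` (`n ≥ 1`) which is the Minkowski sum of `m` (nondegenerate)
line segments has at most `2 ∑_{j=0}^{n−1} C(m−1, j)` vertices (extreme points). -/
theorem zonotope_vertex_count_bound (n m : ℕ) (hn : 0 < n)
    (p q : Fin m → EuclideanSpace ℝ (Fin n)) (hpq : ∀ i, p i ≠ q i) :
    (Set.extremePoints ℝ (∑ i : Fin m, segment ℝ (p i) (q i))).ncard ≤
      2 * ∑ j ∈ Finset.range n, Nat.choose (m - 1) j := by
  have hbound_pos : 1 ≤ ∑ j ∈ Finset.range n, Nat.choose (m - 1) j := by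
    calc 1 = Nat.choose (m - 1) 0 := (Nat.choose_zero_right _).symm
      _ ≤ ∑ j ∈ Finset.range n, Nat.choose (m - 1) j :=
        Finset.single_le_sum (f := fun j => Nat.choose (m - 1) j)
          (fun j _ => Nat.zero_le _) (Finset.mem_range.mpr hn)
  rcases Nat.eq_zero_or_pos m with rfl | hm
  · have h0 : (∑ i : Fin 0, segment ℝ (p i) (q i)) = (0 : Set (EuclideanSpace ℝ (Fin n))) := by
      simp
    have hsub : Set.extremePoints ℝ (∑ i : Fin 0, segment ℝ (p i) (q i)) ⊆
        ({0} : Set (EuclideanSpace ℝ (Fin n))) := by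
      rw [h0, ← Set.singleton_zero]
      exact extremePoints_subset
    calc (Set.extremePoints ℝ (∑ i : Fin 0, segment ℝ (p i) (q i))).ncard
        ≤ ({0} : Set (EuclideanSpace ℝ (Fin n))).ncard :=
          Set.ncard_le_ncard hsub (Set.finite_singleton 0)
      _ = 1 := Set.ncard_singleton 0
      _ ≤ 2 * ∑ j ∈ Finset.range n, Nat.choose (0 - 1) j := by omega
  · classical
    set d : Fin m → EuclideanSpace ℝ (Fin n) := fun i => q i - p i with hd
    set Z := ∑ i : Fin m, segment ℝ (p i) (q i) with hZ
    set f : EuclideanSpace ℝ (Fin n) → (Fin m → Bool) := fun v =>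
      if h : ∃ σ ∈ signSet d, v = ∑ i, (if σ i then q i else p i) then h.choose
      else fun _ => false with hfdef
    have hf : ∀ v ∈ Set.extremePoints ℝ Z, f v ∈ signSet d ∧
        v = ∑ i, (if f v i then q i else p i) := by
      intro v hv
      have hex : ∃ σ ∈ signSet d, v = ∑ i, (if σ i then q i else p i) :=
        extreme_exists_sign p q hpq hv
      have hfv : f v = hex.choose := by rw [hfdef]; exact dif_pos hex
      obtain ⟨h1, h2⟩ := hex.choose_spec
      rw [hfv]
      exact ⟨h1, h2⟩
    have hinj : Set.InjOn f (Set.extremePoints ℝ Z) := by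
      intro v hv w hw hvw
      rw [(hf v hv).2, (hf w hw).2, hvw]
    calc (Set.extremePoints ℝ Z).ncard = (f '' Set.extremePoints ℝ Z).ncard :=
          (Set.ncard_image_of_injOn hinj).symm
      _ ≤ (signSet d).ncard := Set.ncard_le_ncard
          (by rintro _ ⟨v, hv, rfl⟩; exact (hf v hv).1) (Set.toFinite _)
      _ ≤ zB (finrank ℝ (EuclideanSpace ℝ (Fin n))) m := signSet_ncard_le m hm _ d
      _ = 2 * ∑ j ∈ Finset.range n, Nat.choose (m - 1) j := by
          rw [show finrank ℝ (EuclideanSpace ℝ (Fin n)) = n from finrank_euclideanSpace_fin, zB]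

end ZonotopeVertexBoundAux
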